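/- For all x ≥ 0 the Gaussian Mill's ratio G(x) = Φᶜ(x)/γ(x) satisfies 2/(x + √(x²+4)) ≤ G(x) ≤ 2/(x + √(x² + 8/π)). -/

import Mathlib

open Real MeasureTheory Set Filter Topology

noncomputable def mphi (x : ℝ) : ℝ := (Real.sqrt (2 * Real.pi))⁻¹ * Real.exp (-x ^ 2 / 2)

noncomputable def mh (c x : ℝ) : ℝ := mphi x * (2 / c * (Real.sqrt (x ^ 2 + c) - x))

noncomputable def mD (c x : ℝ) : ℝ :=
  -x * mphi x * (2 / c * (Real.sqrt (x ^ 2 + c) - x)) +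
    mphi x * (2 / c * (2 * x / (2 * Real.sqrt (x ^ 2 + c)) - 1))

lemma mphi_pos (x : ℝ) : 0 < mphi x := by
  have := Real.pi_pos
  unfold mphi
  positivity

lemma hasDerivAt_mphi (x : ℝ) : HasDerivAt mphi (-x * mphi x) x := by
  have h1 : HasDerivAt (fun x : ℝ => -x ^ 2 / 2) (-x) x := by
    have := ((hasDerivAt_pow 2 x).neg.div_const 2)
    exact this.congr_deriv (by norm_num; ring)
  have h2 := h1.exp
  have h3 := h2.const_mul (Real.sqrt (2 * Real.pi))⁻¹
  exact h3.congr_deriv (by unfold mphi; ring)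

lemma sq_add_pos {c : ℝ} (hc : 0 < c) (x : ℝ) : 0 < x ^ 2 + c := by positivity

lemma sqrt_sq_add {c : ℝ} (hc : 0 < c) (x : ℝ) :
    Real.sqrt (x ^ 2 + c) ^ 2 = x ^ 2 + c :=
  Real.sq_sqrt (sq_add_pos hc x).le

lemma lt_sqrt_sq_add {c : ℝ} (hc : 0 < c) {x : ℝ} (hx : 0 ≤ x) :
    x < Real.sqrt (x ^ 2 + c) := by
  have h := sqrt_sq_add hc x
  nlinarith [Real.sqrt_nonneg (x ^ 2 + c)]

lemma hasDerivAt_mh {c : ℝ} (hc : 0 < c) (x : ℝ) : HasDerivAt (mh c) (mD c x) x := by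
  have hne : x ^ 2 + c ≠ 0 := (sq_add_pos hc x).ne'
  have hs : HasDerivAt (fun y : ℝ => Real.sqrt (y ^ 2 + c))
      (2 * x / (2 * Real.sqrt (x ^ 2 + c))) x := by
    have := (((hasDerivAt_pow 2 x).add_const c).sqrt hne)
    simpa using this
  have h2 : HasDerivAt (fun y : ℝ => 2 / c * (Real.sqrt (y ^ 2 + c) - y))
      (2 / c * (2 * x / (2 * Real.sqrt (x ^ 2 + c)) - 1)) x :=
    ((hs.sub (hasDerivAt_id x)).const_mul (2 / c))
  exact (hasDerivAt_mphi x).mul h2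

lemma mD_nonpos {c : ℝ} (hc : 0 < c) {x : ℝ} (hx : 0 ≤ x) : mD c x ≤ 0 := by
  have hφ := mphi_pos x
  have hs0 : 0 < Real.sqrt (x ^ 2 + c) := Real.sqrt_pos.2 (sq_add_pos hc x)
  have hxs := lt_sqrt_sq_add hc hx
  have h1 : 2 * x / (2 * Real.sqrt (x ^ 2 + c)) - 1 < 0 := by
    rw [sub_neg, div_lt_one (by positivity)]
    linarith
  have hka : 0 < 2 / c := by positivity
  have t1 : -x * mphi x * (2 / c * (Real.sqrt (x ^ 2 + c) - x)) ≤ 0 := by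
    have hss : 0 ≤ Real.sqrt (x ^ 2 + c) - x := by linarith
    have : 0 ≤ x * mphi x * (2 / c * (Real.sqrt (x ^ 2 + c) - x)) :=
      mul_nonneg (mul_nonneg hx hφ.le) (mul_nonneg hka.le hss)
    nlinarith
  have t2 : mphi x * (2 / c * (2 * x / (2 * Real.sqrt (x ^ 2 + c)) - 1)) ≤ 0 := by
    have : 0 < mphi x * (2 / c) := by positivity
    nlinarith
  unfold mD; linarith

lemma tendsto_mphi : Tendsto mphi atTop (𝓝 0) := by
  have h1 : Tendsto (fun x : ℝ => x ^ 2 / 2) atTop atTop :=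
    (tendsto_pow_atTop (two_ne_zero)).atTop_div_const two_pos
  have h2 : Tendsto (fun x : ℝ => Real.exp (-(x ^ 2 / 2))) atTop (𝓝 0) :=
    Real.tendsto_exp_neg_atTop_nhds_zero.comp h1
  have h3 : Tendsto (fun x : ℝ => (Real.sqrt (2 * Real.pi))⁻¹ * Real.exp (-(x ^ 2 / 2)))
      atTop (𝓝 ((Real.sqrt (2 * Real.pi))⁻¹ * 0)) := h2.const_mul _
  rw [mul_zero] at h3
  refine h3.congr fun x => ?_
  unfold mphi; rw [neg_div]

lemma tendsto_mh {c : ℝ} (hc : 0 < c) : Tendsto (mh c) atTop (𝓝 0) := by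
  have hb : Tendsto (fun x : ℝ => 2 / Real.sqrt c * mphi x) atTop (𝓝 (2 / Real.sqrt c * 0)) :=
    tendsto_mphi.const_mul _
  rw [mul_zero] at hb
  apply tendsto_of_tendsto_of_tendsto_of_le_of_le' tendsto_const_nhds hb
  · filter_upwards [eventually_ge_atTop (0 : ℝ)] with x hx
    have hφ := (mphi_pos x).le
    have hss : 0 ≤ Real.sqrt (x ^ 2 + c) - x := sub_nonneg.2 (lt_sqrt_sq_add hc hx).le
    unfold mh
    exact mul_nonneg hφ (mul_nonneg (by positivity) hss)
  · filter_upwards [eventually_ge_atTop (0 : ℝ)] with x hx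
    have hφ := (mphi_pos x).le
    have hsc : Real.sqrt c ≤ Real.sqrt (x ^ 2 + c) := Real.sqrt_le_sqrt (by nlinarith)
    have hsc0 : 0 < Real.sqrt c := Real.sqrt_pos.2 hc
    have hs2 := sqrt_sq_add hc x
    have hxs := lt_sqrt_sq_add hc hx
    have key : Real.sqrt (x ^ 2 + c) - x ≤ c / Real.sqrt c := by
      rw [le_div_iff₀ hsc0]
      nlinarith
    have hcc : c / Real.sqrt c = Real.sqrt c := Real.div_sqrt
    rw [hcc] at key
    unfold mh
    have : 2 / c * (Real.sqrt (x ^ 2 + c) - x) ≤ 2 / c * Real.sqrt c := by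
      apply mul_le_mul_of_nonneg_left key (by positivity)
    calc mphi x * (2 / c * (Real.sqrt (x ^ 2 + c) - x)) ≤ mphi x * (2 / c * Real.sqrt c) :=
          mul_le_mul_of_nonneg_left this hφ
      _ = 2 / Real.sqrt c * mphi x := by
          have hm : Real.sqrt c * Real.sqrt c = c := Real.mul_self_sqrt hc.le
          rw [mul_comm (mphi x)]
          congr 1
          field_simp
          nlinarith [hm]

lemma integrable_mphi : Integrable mphi := by
  have h := (integrable_exp_neg_mul_sq (by norm_num : (0:ℝ) < 1/2)).const_mul
    (Real.sqrt (2 * Real.pi))⁻¹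
  refine h.congr ?_
  filter_upwards with x
  unfold mphi
  congr 1
  ring

lemma integrableOn_mD {c : ℝ} (hc : 0 < c) {a : ℝ} (ha : 0 ≤ a) :
    IntegrableOn (mD c) (Ioi a) :=
  integrableOn_Ioi_deriv_of_nonpos' (fun x _ => hasDerivAt_mh hc x)
    (fun x hx => mD_nonpos hc (le_trans ha hx.le)) (tendsto_mh hc)

lemma mftc {c : ℝ} (hc : 0 < c) {a : ℝ} (ha : 0 ≤ a) :
    ∫ u in Ioi a, (mphi u + mD c u) = (∫ u in Ioi a, mphi u) - mh c a := by
  have h1 : ∫ u in Ioi a, mD c u = 0 - mh c a :=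
    integral_Ioi_of_hasDerivAt_of_nonpos' (fun x _ => hasDerivAt_mh hc x)
      (fun x hx => mD_nonpos hc (le_trans ha hx.le)) (tendsto_mh hc)
  rw [integral_add integrable_mphi.integrableOn (integrableOn_mD hc ha), h1]
  ring

lemma sum_eq {c : ℝ} (hc : 0 < c) (u : ℝ) :
    mphi u + mD c u = mphi u / (c * Real.sqrt (u ^ 2 + c)) *
      (Real.sqrt (u ^ 2 + c) * (2 * u ^ 2 + c - 2) - 2 * u * (u ^ 2 + c - 1)) := by
  have hs0 : 0 < Real.sqrt (u ^ 2 + c) := Real.sqrt_pos.2 (sq_add_pos hc u)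
  have hs2 : Real.sqrt (u ^ 2 + c) ^ 2 = u ^ 2 + c := sqrt_sq_add hc u
  set s := Real.sqrt (u ^ 2 + c)
  set p := mphi u
  unfold mD
  show p + (-u * p * (2 / c * (s - u)) + p * (2 / c * (2 * u / (2 * s) - 1))) =
      p / (c * s) * (s * (2 * u ^ 2 + c - 2) - 2 * u * (u ^ 2 + c - 1))
  field_simp
  linear_combination (-2 * p * u) * hs2

lemma M_nonneg {c u : ℝ} (hc2 : 2 ≤ c) (hc4 : c ≤ 4) (hu : 0 ≤ u)
    (h : (4 - c) * u ^ 2 ≤ (c - 2) ^ 2) :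
    0 ≤ Real.sqrt (u ^ 2 + c) * (2 * u ^ 2 + c - 2) - 2 * u * (u ^ 2 + c - 1) := by
  have hc : (0:ℝ) < c := by linarith
  have hs2 : Real.sqrt (u ^ 2 + c) ^ 2 = u ^ 2 + c := sqrt_sq_add hc u
  have hs0 : 0 ≤ Real.sqrt (u ^ 2 + c) := Real.sqrt_nonneg _
  set s := Real.sqrt (u ^ 2 + c)
  have hA : 0 ≤ 2 * u * (u ^ 2 + c - 1) := by nlinarith
  have hB : 0 ≤ s * (2 * u ^ 2 + c - 2) := by nlinarith
  have key : (s * (2 * u ^ 2 + c - 2)) ^ 2 - (2 * u * (u ^ 2 + c - 1)) ^ 2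
      = c * ((c - 2) ^ 2 - (4 - c) * u ^ 2) := by
    linear_combination (2 * u ^ 2 + c - 2) ^ 2 * hs2
  have hsq : (2 * u * (u ^ 2 + c - 1)) ^ 2 ≤ (s * (2 * u ^ 2 + c - 2)) ^ 2 := by nlinarith
  have := Real.sqrt_le_sqrt hsq
  rw [Real.sqrt_sq hA, Real.sqrt_sq hB] at this
  linarith

lemma M_nonpos {c u : ℝ} (hc2 : 2 ≤ c) (hc4 : c ≤ 4) (hu : 0 ≤ u)
    (h : (c - 2) ^ 2 ≤ (4 - c) * u ^ 2) :
    Real.sqrt (u ^ 2 + c) * (2 * u ^ 2 + c - 2) - 2 * u * (u ^ 2 + c - 1) ≤ 0 := by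
  have hc : (0:ℝ) < c := by linarith
  have hs2 : Real.sqrt (u ^ 2 + c) ^ 2 = u ^ 2 + c := sqrt_sq_add hc u
  have hs0 : 0 ≤ Real.sqrt (u ^ 2 + c) := Real.sqrt_nonneg _
  set s := Real.sqrt (u ^ 2 + c)
  have hA : 0 ≤ 2 * u * (u ^ 2 + c - 1) := by nlinarith
  have hB : 0 ≤ s * (2 * u ^ 2 + c - 2) := by nlinarith
  have key : (s * (2 * u ^ 2 + c - 2)) ^ 2 - (2 * u * (u ^ 2 + c - 1)) ^ 2
      = c * ((c - 2) ^ 2 - (4 - c) * u ^ 2) := by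
    linear_combination (2 * u ^ 2 + c - 2) ^ 2 * hs2
  have hsq : (s * (2 * u ^ 2 + c - 2)) ^ 2 ≤ (2 * u * (u ^ 2 + c - 1)) ^ 2 := by nlinarith
  have := Real.sqrt_le_sqrt hsq
  rw [Real.sqrt_sq hA, Real.sqrt_sq hB] at this
  linarith

lemma integral_mphi_Ioi_zero : ∫ u in Ioi (0:ℝ), mphi u = 1 / 2 := by
  have h1 : ∫ u in Ioi (0:ℝ), Real.exp (-(1/2 : ℝ) * u ^ 2) = Real.sqrt (π / (1/2)) / 2 :=
    integral_gaussian_Ioi (1/2)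
  have h2 : ∫ u in Ioi (0:ℝ), mphi u
      = (Real.sqrt (2 * Real.pi))⁻¹ * ∫ u in Ioi (0:ℝ), Real.exp (-(1/2 : ℝ) * u ^ 2) := by
    rw [← integral_const_mul]
    apply setIntegral_congr_fun measurableSet_Ioi
    intro u _
    unfold mphi
    congr 1
    ring
  have hπ : π / (1/2) = 2 * π := by ring
  have hsq : (0:ℝ) < Real.sqrt (2 * π) := Real.sqrt_pos.2 (by positivity)
  rw [h2, h1, hπ]
  field_simp

lemma mh_zero : mh (8 / Real.pi) 0 = 1 / 2 := by
  have hπ := Real.pi_pos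
  have hc : (0:ℝ) < 8 / π := by positivity
  have h1 : Real.sqrt ((0:ℝ) ^ 2 + 8 / π) = Real.sqrt (8 / π) := by norm_num
  have h16 : Real.sqrt (8 / π) * Real.sqrt (2 * π) = 4 := by
    rw [← Real.sqrt_mul hc.le]
    have h8 : 8 / π * (2 * π) = 16 := by field_simp; ring
    rw [h8, show (16:ℝ) = 4 ^ 2 by norm_num, Real.sqrt_sq (by norm_num : (0:ℝ) ≤ 4)]
  have hs8 : 0 < Real.sqrt (8 / π) := Real.sqrt_pos.2 hc
  have hs2π : 0 < Real.sqrt (2 * π) := Real.sqrt_pos.2 (by positivity)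
  have ha2 : Real.sqrt (8 / π) ^ 2 = 8 / π := Real.sq_sqrt hc.le
  have hb2 : Real.sqrt (2 * π) ^ 2 = 2 * π := Real.sq_sqrt (by positivity)
  have hexp : Real.exp (-(0:ℝ) ^ 2 / 2) = 1 := by norm_num
  unfold mh mphi
  rw [h1, hexp, mul_one, sub_zero]
  rw [inv_mul_eq_div, div_eq_iff hs2π.ne']
  set a := Real.sqrt (8 / π)
  set b := Real.sqrt (2 * π)
  field_simp
  linear_combination (-2 * a) * hb2 + (2 * b) * h16

lemma two_div_eq {c x : ℝ} (hc : 0 < c) (hx : 0 ≤ x) :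
    2 / (x + Real.sqrt (x ^ 2 + c)) = 2 / c * (Real.sqrt (x ^ 2 + c) - x) := by
  have hxs := lt_sqrt_sq_add hc hx
  have hs2 := sqrt_sq_add hc x
  have hpos : 0 < x + Real.sqrt (x ^ 2 + c) := by linarith
  field_simp
  linear_combination (-1) * hs2

theorem mills_ratio_bounds
    (γ Φc G : ℝ → ℝ)
    (hγ : ∀ x, γ x = (Real.sqrt (2 * Real.pi))⁻¹ * Real.exp (-x ^ 2 / 2))
    (hΦc : ∀ x, Φc x = ∫ u in Set.Ioi x, γ u)
    (hG : ∀ x, G x = Φc x / γ x) :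
    ∀ x : ℝ, 0 ≤ x →
      2 / (x + Real.sqrt (x ^ 2 + 4)) ≤ G x ∧
      G x ≤ 2 / (x + Real.sqrt (x ^ 2 + 8 / Real.pi)) := by
  have hγφ : γ = mphi := funext hγ
  intro x hx
  have hγx : 0 < γ x := by rw [hγφ]; exact mphi_pos x
  have hΦφ : ∀ y, Φc y = ∫ u in Ioi y, mphi u := fun y => by rw [hΦc, hγφ]
  constructor
  · -- lower bound, c = 4
    have hc : (0:ℝ) < 4 := by norm_num
    have hnn : 0 ≤ ∫ u in Ioi x, (mphi u + mD 4 u) := by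
      apply setIntegral_nonneg measurableSet_Ioi
      intro u hu
      have hu0 : (0:ℝ) ≤ u := le_trans hx (le_of_lt hu)
      rw [sum_eq hc u]
      have hsp : 0 < Real.sqrt (u ^ 2 + 4) := Real.sqrt_pos.2 (by positivity)
      apply mul_nonneg (div_nonneg (mphi_pos u).le (by positivity))
      exact M_nonneg (by norm_num) (by norm_num) hu0 (by nlinarith)
    have hftc := mftc hc hx
    rw [hG, le_div_iff₀ hγx, hγφ, hΦφ x, two_div_eq hc hx]
    have hmh : 2 / 4 * (Real.sqrt (x ^ 2 + 4) - x) * mphi x = mh 4 x := by unfold mh; ring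
    linarith
  · -- upper bound, c = 8/π
    have hπ := Real.pi_pos
    set c := 8 / Real.pi with hcdef
    have hπ4 : Real.pi < 3.15 := Real.pi_lt_d2
    have hπ3 : 3 < Real.pi := Real.pi_gt_three
    have hc2 : 2 < c := by rw [hcdef, lt_div_iff₀ hπ]; linarith
    have hc4 : c < 4 := by rw [hcdef, div_lt_iff₀ hπ]; linarith
    have hc : (0:ℝ) < c := by linarith
    have key : Φc x ≤ mh c x := by
      rcases le_total ((4 - c) * x ^ 2) ((c - 2) ^ 2) with hcase | hcase
      · -- near-zero case: split the integral at 0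
        have hmz : mh c 0 = 1 / 2 := by rw [hcdef]; exact mh_zero
        have h0 := mftc hc (le_refl (0:ℝ))
        rw [integral_mphi_Ioi_zero, hmz] at h0
        have hint : IntegrableOn (fun u => mphi u + mD c u) (Ioi (0:ℝ)) :=
          integrable_mphi.integrableOn.add (integrableOn_mD hc le_rfl)
        have hsplit : ∫ u in Ioi (0:ℝ), (mphi u + mD c u)
            = (∫ u in Ioc (0:ℝ) x, (mphi u + mD c u)) + ∫ u in Ioi x, (mphi u + mD c u) := by
          rw [← Ioc_union_Ioi_eq_Ioi hx]
          exact setIntegral_union (Ioc_disjoint_Ioi le_rfl) measurableSet_Ioi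
            (hint.mono_set Ioc_subset_Ioi_self)
            (hint.mono_set (Ioi_subset_Ioi hx))
        have hIoc : 0 ≤ ∫ u in Ioc (0:ℝ) x, (mphi u + mD c u) := by
          apply setIntegral_nonneg measurableSet_Ioc
          intro u hu
          have hu0 : (0:ℝ) ≤ u := hu.1.le
          rw [sum_eq hc u]
          have hsp : 0 < Real.sqrt (u ^ 2 + c) := Real.sqrt_pos.2 (by positivity)
          apply mul_nonneg (div_nonneg (mphi_pos u).le (by positivity))
          refine M_nonneg hc2.le hc4.le hu0 ?_
          have hux : u ≤ x := hu.2
          nlinarith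
        have hftc := mftc hc hx
        rw [hΦφ x]
        linarith
      · -- tail case: integrand nonpositive on Ioi x
        have hnp : ∫ u in Ioi x, (mphi u + mD c u) ≤ 0 := by
          apply setIntegral_nonpos measurableSet_Ioi
          intro u hu
          have hu0 : (0:ℝ) ≤ u := le_trans hx hu.le
          rw [sum_eq hc u]
          have hsp : 0 < Real.sqrt (u ^ 2 + c) := Real.sqrt_pos.2 (by positivity)
          have hxu : x ≤ u := hu.le
          have hM : Real.sqrt (u ^ 2 + c) * (2 * u ^ 2 + c - 2) - 2 * u * (u ^ 2 + c - 1) ≤ 0 := by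
            refine M_nonpos hc2.le hc4.le hu0 ?_
            nlinarith
          exact mul_nonpos_iff.2 (Or.inl ⟨div_nonneg (mphi_pos u).le (by positivity), hM⟩)
        have hftc := mftc hc hx
        rw [hΦφ x]
        linarith
    rw [hG, div_le_iff₀ hγx, hγφ, two_div_eq hc hx]
    have hmh : 2 / c * (Real.sqrt (x ^ 2 + c) - x) * mphi x = mh c x := by unfold mh; ring
    linarith
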